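/- Theorem 2.3 (second equivalence): A ring extension R ⊆ S is quasi-Prüfer if and only if R ⊆ S is a residually algebraic pair. -/

import Mathlib

/-- A ring extension `R ⊆ S` (given by an injective algebra map) is *Prüfer* if every
intermediate ring `T ∈ [R,S]` is integrally closed in `S`, i.e. `R ⊆ S` is a normal pair. -/
def IsPruferExtension (R S : Type*) [CommRing R] [CommRing S] [Algebra R S] : Prop :=
  ∀ T : Subalgebra R S, ∀ x : S, IsIntegral T x → x ∈ T

/-- A ring extension `R ⊆ S` is *quasi-Prüfer* if the integral closure `\overline{R}` of `R`
in `S` is such that `\overline{R} ⊆ S` is Prüfer, i.e. every intermediate ring of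
`[\overline{R}, S]` is integrally closed in `S`. -/
def IsQuasiPruferExtension (R S : Type*) [CommRing R] [CommRing S] [Algebra R S] : Prop :=
  ∀ T : Subalgebra R S, integralClosure R S ≤ T → ∀ x : S, IsIntegral T x → x ∈ T

open Polynomial

set_option maxHeartbeats 1600000
set_option synthInstance.maxHeartbeats 400000

section AuxTrans

theorem isAlgebraic_of_integral_coeffs {Rp D : Type*} [CommRing Rp] [IsDomain Rp]
    [CommRing D] [IsDomain D] [Algebra Rp D]
    (hinj : Function.Injective (algebraMap Rp D)) (τ : D) (q : Polynomial D)
    (hq0 : q ≠ 0) (hev : Polynomial.eval τ q = 0)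
    (hint : ∀ i, IsIntegral Rp (q.coeff i)) : IsAlgebraic Rp τ := by
  classical
  set F := FractionRing D with hF
  set ε : D →+* F := algebraMap D F with hε
  have hεinj : Function.Injective ε := IsFractionRing.injective D F
  have hinjRF : Function.Injective (algebraMap Rp F) := by
    rw [IsScalarTower.algebraMap_eq Rp D F]
    exact hεinj.comp hinj
  haveI : FaithfulSMul Rp F := (faithfulSMul_iff_algebraMap_injective Rp F).mpr hinjRF
  letI := FractionRing.liftAlgebra Rp F
  haveI := FractionRing.isScalarTower_liftAlgebra Rp F
  -- the coefficients, as elements of F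
  set d := q.natDegree with hd
  set s : Set F := (fun i => ε (q.coeff i)) '' ↑(Finset.range (d+1)) with hs
  have hsfin : s.Finite := Set.Finite.image _ (Finset.finite_toSet _)
  have hsint : ∀ y ∈ s, IsIntegral (FractionRing Rp) y := by
    rintro y ⟨i, _, rfl⟩
    have h1 : IsIntegral Rp (ε (q.coeff i)) :=
      IsIntegral.map (IsScalarTower.toAlgHom Rp D F) (hint i)
    exact IsIntegral.tower_top h1
  -- the subalgebra V
  set V : Subalgebra (FractionRing Rp) F := Algebra.adjoin (FractionRing Rp) s with hV
  haveI hVfin : Module.Finite (FractionRing Rp) ↥V := by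
    exact ⟨(Subalgebra.toSubmodule V).fg_top.mpr <| fg_adjoin_of_finite hsfin hsint⟩
  haveI : Algebra.IsIntegral (FractionRing Rp) ↥V :=
    Algebra.IsIntegral.of_finite (FractionRing Rp) ↥V
  have hVfield : IsField ↥V := by
    rw [← Algebra.IsIntegral.isField_iff_isField (R := FractionRing Rp) (S := ↥V)
      (RingHom.injective (algebraMap (FractionRing Rp) ↥V))]
    exact Field.toIsField (FractionRing Rp)
  letI : Field ↥V := hVfield.toField
  -- the polynomial over V
  have hmemV : ∀ i, i ≤ d → ε (q.coeff i) ∈ V := by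
    intro i hi
    exact Algebra.subset_adjoin ⟨i, by simpa using Nat.lt_succ_of_le hi, rfl⟩
  set cV : ℕ → ↥V := fun i => if h : i ≤ d then ⟨ε (q.coeff i), hmemV i h⟩ else 0 with hcV
  set qV : Polynomial ↥V := ∑ i ∈ Finset.range (d+1), Polynomial.monomial i (cV i) with hqV
  have hqVcoeff : ∀ j, j ≤ d → qV.coeff j = cV j := by
    intro j hj
    rw [hqV, Polynomial.finset_sum_coeff]
    rw [Finset.sum_eq_single j]
    · simp
    · intro b _ hbj
      simp [Polynomial.coeff_monomial, hbj]
    · intro hj'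
      exact absurd (Finset.mem_range.mpr (Nat.lt_succ_of_le hj)) hj'
  have hqVne : qV ≠ 0 := by
    intro h0
    have h1 : qV.coeff d = cV d := hqVcoeff d le_rfl
    rw [h0] at h1
    have h2 : (0 : ↥V) = cV d := by simpa using h1
    have h3 : ε (q.coeff d) = 0 := by
      have h4 := congrArg (fun y : ↥V => (y : F)) h2
      simpa [hcV] using h4.symm
    have h5 : q.coeff d = 0 := by
      apply hεinj
      simpa using h3
    exact (Polynomial.leadingCoeff_ne_zero.mpr hq0) h5
  set τF : F := ε τ with hτF
  have hqVev : Polynomial.aeval τF qV = 0 := by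
    rw [hqV, map_sum]
    have h1 : ∀ i ∈ Finset.range (d+1),
        Polynomial.aeval τF (Polynomial.monomial i (cV i)) = ε (q.coeff i * τ ^ i) := by
      intro i hi
      rw [Polynomial.aeval_monomial]
      have h2 : (algebraMap ↥V F) (cV i) = ε (q.coeff i) := by
        have hi' : i ≤ d := Nat.lt_succ_iff.mp (Finset.mem_range.mp hi)
        simp only [hcV, hi', dif_pos]
        rfl
      rw [h2, hτF, map_mul, map_pow]
    rw [Finset.sum_congr rfl h1, ← map_sum]
    have h3 : ∑ i ∈ Finset.range (d+1), q.coeff i * τ ^ i = 0 := by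
      rw [← Polynomial.eval_eq_sum_range]
      exact hev
    rw [h3, map_zero]
  -- τF is integral over V, hence over K
  have hτVint : IsIntegral ↥V τF := by
    rw [← isAlgebraic_iff_isIntegral]
    exact ⟨qV, hqVne, hqVev⟩
  have hτKint : IsIntegral (FractionRing Rp) τF := isIntegral_trans τF hτVint
  have hτKalg : IsAlgebraic (FractionRing Rp) τF := hτKint.isAlgebraic
  have hτRpalg : IsAlgebraic Rp τF :=
    (IsFractionRing.isAlgebraic_iff Rp (FractionRing Rp) F).mpr hτKalg
  -- pull back to D
  obtain ⟨g, hg0, hgev⟩ := hτRpalg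
  refine ⟨g, hg0, ?_⟩
  apply hεinj
  rw [map_zero]
  have h6 : Polynomial.aeval τF g = ε (Polynomial.aeval τ g) :=
    Polynomial.aeval_algHom_apply (IsScalarTower.toAlgHom Rp D F) τ g
  rw [← h6]
  exact hgev

end AuxTrans

section Aux

variable {R S : Type*} [CommRing R] [CommRing S] [Algebra R S]

theorem horner_decomp (x : S) (g : Polynomial ↥(integralClosure R S))
    (hg : eval₂ (algebraMap ↥(integralClosure R S) S) x g = 0) (i : ℕ) :
    ∃ u v : S, u ∈ integralClosure R S ∧ v ∈ integralClosure R S ∧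
      u * x ∈ integralClosure R S ∧ v * x ∈ integralClosure R S ∧
      ((g.coeff i : S)) = u + v * x := by
  classical
  set m := g.natDegree with hm
  set h : ℕ → S := fun j => ∑ k ∈ Finset.range (j+1), ((g.coeff (m - j + k) : S)) * x^k with hh
  have h0 : h 0 = (g.coeff m : S) := by
    simp [hh]
  have hrec : ∀ j, j + 1 ≤ m → h (j+1) = h j * x + (g.coeff (m - (j+1)) : S) := by
    intro j hj
    have : h (j+1) = (∑ k ∈ Finset.range (j+1), ((g.coeff (m - (j+1) + (k+1)) : S)) * x^(k+1))
        + ((g.coeff (m - (j+1) + 0) : S)) * x^0 := by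
      rw [hh]; exact Finset.sum_range_succ' _ _
    rw [this]
    have hidx : ∀ k, m - (j+1) + (k+1) = m - j + k := by intro k; omega
    have : (∑ k ∈ Finset.range (j+1), ((g.coeff (m - (j+1) + (k+1)) : S)) * x^(k+1))
        = h j * x := by
      rw [hh, Finset.sum_mul]
      refine Finset.sum_congr rfl ?_
      intro k _
      rw [hidx k, pow_succ, mul_assoc]
    rw [this]
    simp
  have hm0 : h m = 0 := by
    have h1 : h m = ∑ k ∈ Finset.range (m+1), ((g.coeff k : S)) * x^k := by
      rw [hh]
      refine Finset.sum_congr rfl ?_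
      intro k _
      have : m - m + k = k := by omega
      rw [this]
    rw [h1, ← hg, eval₂_eq_sum_range]
    rfl
  -- the module spanned by 1 and the tails
  set gens : Finset S := insert (1:S) ((Finset.range (m+1)).image h) with hgens
  set W : Submodule ↥(integralClosure R S) S := Submodule.span ↥(integralClosure R S) (gens : Set S) with hW
  have hmemW : ∀ j, j ≤ m → h j ∈ W := by
    intro j hj
    apply Submodule.subset_span
    simp only [hgens, Finset.coe_insert, Set.mem_insert_iff, Finset.coe_image]
    right
    exact ⟨j, by simpa using Nat.lt_succ_of_le hj, rfl⟩
  have honeW : (1:S) ∈ W := Submodule.subset_span (by simp [hgens])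
  have hsmul : ∀ (a : ↥(integralClosure R S)) (w : S), w ∈ W → (a : S) * w ∈ W := by
    intro a w hw
    have := W.smul_mem a hw
    rwa [Algebra.smul_def] at this
  have hmul : ∀ i, ∀ j, i ≤ m → j ≤ m → h i * h j ∈ W := by
    intro i
    induction i with
    | zero =>
      intro j _ hj
      rw [h0]
      exact hsmul _ _ (hmemW j hj)
    | succ i ih =>
      intro j hi1 hj
      rcases eq_or_lt_of_le hj with hjm | hjm
      · rw [hjm, hm0, mul_zero]; exact W.zero_mem
      · have hj1 : j + 1 ≤ m := hjm
        have e1 : h (i+1) * h j = h i * h (j+1)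
            + ((g.coeff (m - (i+1)) : S) * h j - (g.coeff (m - (j+1)) : S) * h i) := by
          rw [hrec i hi1, hrec j hj1]; ring
        rw [e1]
        refine W.add_mem (ih (j+1) (by omega) hj1) (W.sub_mem ?_ ?_)
        · exact hsmul _ _ (hmemW j hj)
        · exact hsmul _ _ (hmemW i (by omega))
  -- multiplicative closure of W
  have hclosed : ∀ a ∈ W, ∀ b ∈ W, a * b ∈ W := by
    intro a ha
    induction ha using Submodule.span_induction with
    | mem a hag =>
      intro b hb
      induction hb using Submodule.span_induction with
      | mem b hbg =>
        simp only [hgens, Finset.coe_insert, Set.mem_insert_iff, Finset.coe_image,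
          Set.mem_image, Finset.mem_coe, Finset.mem_range] at hag hbg
        rcases hag with rfl | ⟨i, hi, rfl⟩
        · rw [one_mul]
          rcases hbg with rfl | ⟨j, hj, rfl⟩
          · exact honeW
          · exact hmemW j (by omega)
        · rcases hbg with rfl | ⟨j, hj, rfl⟩
          · rw [mul_one]; exact hmemW i (by omega)
          · exact hmul i j (by omega) (by omega)
      | zero => rw [mul_zero]; exact W.zero_mem
      | add b c _ _ h1 h2 => rw [mul_add]; exact W.add_mem h1 h2
      | smul r b _ h1 => rw [mul_smul_comm]; exact W.smul_mem r h1
    | zero => intro b hb; rw [zero_mul]; exact W.zero_mem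
    | add a c _ _ h1 h2 => intro b hb; rw [add_mul]; exact W.add_mem (h1 b hb) (h2 b hb)
    | smul r a _ h1 => intro b hb; rw [smul_mul_assoc]; exact W.smul_mem r (h1 b hb)
  set WS : Subalgebra ↥(integralClosure R S) S := W.toSubalgebra honeW (fun a b ha hb => hclosed a ha b hb) with hWS
  have hWFG : W.FG := ⟨gens, rfl⟩
  haveI hAint : Algebra.IsIntegral R ↥(integralClosure R S) := by
    refine ⟨fun a => ?_⟩
    exact (isIntegral_algHom_iff (integralClosure R S).val Subtype.val_injective).mp a.2
  have hInt : ∀ j, j ≤ m → h j ∈ integralClosure R S := by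
    intro j hj
    have h1 : IsIntegral ↥(integralClosure R S) (h j) := by
      refine IsIntegral.of_mem_of_fg WS ?_ _ (Submodule.subset_span ?_)
      · exact hWFG
      · simp only [hgens, Finset.coe_insert, Set.mem_insert_iff, Finset.coe_image,
          Set.mem_image, Finset.mem_coe, Finset.mem_range]
        right
        exact ⟨j, by omega, rfl⟩
    exact isIntegral_trans (h j) h1
  have hIntx : ∀ j, j ≤ m → h j * x ∈ integralClosure R S := by
    intro j hj
    rcases eq_or_lt_of_le hj with hjm | hjm
    · rw [hjm, hm0, zero_mul]; exact (integralClosure R S).zero_mem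
    · have hj1 : j + 1 ≤ m := hjm
      have : h j * x = h (j+1) - (g.coeff (m - (j+1)) : S) := by rw [hrec j hj1]; ring
      rw [this]
      exact Subalgebra.sub_mem _ (hInt (j+1) hj1) (SetLike.coe_mem _)
  -- now decompose the i-th coefficient
  rcases lt_trichotomy i m with him | him | him
  · -- i < m : coeff i = h (m-i) - h (m-i-1) * x
    set j : ℕ := m - i - 1 with hj
    have hji : m - (j+1) = i := by omega
    have hj1 : j + 1 ≤ m := by omega
    refine ⟨h (j+1), -(h j), hInt (j+1) hj1, Subalgebra.neg_mem _ (hInt j (by omega)),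
      hIntx (j+1) hj1, ?_, ?_⟩
    · have : -(h j) * x = -(h j * x) := by ring
      rw [this]; exact Subalgebra.neg_mem _ (hIntx j (by omega))
    · have := hrec j hj1
      rw [hji] at this
      rw [this]; ring
  · -- i = m
    refine ⟨(g.coeff m : S), 0, SetLike.coe_mem _, (integralClosure R S).zero_mem, ?_, ?_, ?_⟩
    · have : (g.coeff m : S) * x = h 0 * x := by rw [h0]
      rw [this]; exact hIntx 0 (by omega)
    · rw [zero_mul]; exact (integralClosure R S).zero_mem
    · rw [him]; ring
  · -- i > m : coeff = 0
    refine ⟨0, 0, (integralClosure R S).zero_mem, (integralClosure R S).zero_mem, ?_, ?_, ?_⟩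
    · rw [zero_mul]; exact (integralClosure R S).zero_mem
    · rw [zero_mul]; exact (integralClosure R S).zero_mem
    · rw [coeff_eq_zero_of_natDegree_lt him]
      push_cast
      ring

theorem content_span_top
    (hRA : ∀ T : Subalgebra R S, ∀ Q : Ideal T, Q.IsPrime →
        Algebra.IsAlgebraic (R ⧸ Q.comap (algebraMap R T)) (T ⧸ Q))
    (x : S) :
    Ideal.span {a : ↥(integralClosure R S) | ∃ g : Polynomial ↥(integralClosure R S),
       eval₂ (algebraMap ↥(integralClosure R S) S) x g = 0 ∧ ∃ i, g.coeff i = a} = ⊤ := by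
  classical
  by_contra hne
  obtain ⟨q, hqmax, hcq⟩ := Ideal.exists_le_maximal _ hne
  haveI := hqmax
  haveI hqp : q.IsPrime := hqmax.isPrime
  set aev : Polynomial ↥(integralClosure R S) →ₐ[↥(integralClosure R S)] S :=
    Polynomial.aeval x with haev
  set T₁ : Subalgebra R S := (aev.range).restrictScalars R with hT₁
  have hmem : ∀ g : Polynomial ↥(integralClosure R S), aev g ∈ T₁ := by
    intro g
    rw [hT₁, Subalgebra.mem_restrictScalars]
    exact ⟨g, rfl⟩
  set φ : Polynomial ↥(integralClosure R S) →+* ↥T₁ :=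
    (aev : Polynomial ↥(integralClosure R S) →+* S).codRestrict T₁.toSubring hmem with hφ
  have hφval : ∀ g, ((φ g : S)) = aev g := fun g => rfl
  have hφsurj : Function.Surjective φ := by
    rintro ⟨w, hw⟩
    rw [hT₁, Subalgebra.mem_restrictScalars] at hw
    obtain ⟨g, hg⟩ := hw
    exact ⟨g, Subtype.ext hg⟩
  set Θ : Polynomial ↥(integralClosure R S) →+* Polynomial (↥(integralClosure R S) ⧸ q) :=
    Polynomial.mapRingHom (Ideal.Quotient.mk q) with hΘ
  have hΘsurj : Function.Surjective Θ :=
    Polynomial.map_surjective _ Ideal.Quotient.mk_surjective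
  have hker : ∀ g ∈ RingHom.ker φ, Θ g = 0 := by
    intro g hg
    have hg0 : eval₂ (algebraMap ↥(integralClosure R S) S) x g = 0 := by
      have := congrArg (fun z : ↥T₁ => (z : S)) hg
      simpa [hφval, haev, aeval_def] using this
    have hcoeff : ∀ i, g.coeff i ∈ q := by
      intro i
      exact hcq (Ideal.subset_span ⟨g, hg0, i, rfl⟩)
    ext i
    simp [hΘ, Polynomial.coeff_map, Ideal.Quotient.eq_zero_iff_mem.mpr (hcoeff i)]
  set e₁ := RingHom.quotientKerEquivOfSurjective hφsurj with he₁
  set ωq : Polynomial ↥(integralClosure R S) ⧸ RingHom.ker φ →+* Polynomial (↥(integralClosure R S) ⧸ q) :=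
    Ideal.Quotient.lift (RingHom.ker φ) Θ hker with hωq
  set ω : ↥T₁ →+* Polynomial (↥(integralClosure R S) ⧸ q) := ωq.comp (e₁.symm : ↥T₁ →+* _) with hω
  have hωφ : ∀ g, ω (φ g) = Θ g := by
    intro g
    have h1 : e₁ (Ideal.Quotient.mk (RingHom.ker φ) g) = φ g := by
      simp [he₁, RingHom.quotientKerEquivOfSurjective, RingHom.kerLift_mk]
    have h2 : (e₁.symm : ↥T₁ →+* _) (φ g) = Ideal.Quotient.mk (RingHom.ker φ) g := by
      apply e₁.injective
      simp [h1]
    rw [hω, RingHom.comp_apply, h2, hωq, Ideal.Quotient.lift_mk]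
  have hωsurj : Function.Surjective ω := by
    intro p
    obtain ⟨g, hg⟩ := hΘsurj p
    exact ⟨φ g, by rw [hωφ, hg]⟩
  set Q₁ : Ideal ↥T₁ := RingHom.ker ω with hQ₁
  haveI hQ₁p : Q₁.IsPrime := RingHom.ker_isPrime ω
  have halg := hRA T₁ Q₁ hQ₁p
  set p₁ : Ideal R := Q₁.comap (algebraMap R ↥T₁) with hp₁
  -- key commutation
  have KC : ∀ r : R, ω (algebraMap R ↥T₁ r) =
      Polynomial.C ((Ideal.Quotient.mk q) (algebraMap R ↥(integralClosure R S) r)) := by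
    intro r
    have h1 : algebraMap R ↥T₁ r = φ (Polynomial.C (algebraMap R ↥(integralClosure R S) r)) := by
      apply Subtype.ext
      rw [hφval]
      simp [haev]
    rw [h1, hωφ]
    simp [hΘ]
  have h₀ : ∀ r ∈ p₁, ((Ideal.Quotient.mk q).comp (algebraMap R ↥(integralClosure R S))) r = 0 := by
    intro r hr
    have : ω (algebraMap R ↥T₁ r) = 0 := hr
    rw [KC r] at this
    simpa using this
  set ρ₀ : R ⧸ p₁ →+* (↥(integralClosure R S) ⧸ q) := Ideal.Quotient.lift p₁ _ h₀ with hρ₀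
  have hρ₀mk : ∀ r : R, ρ₀ (Ideal.Quotient.mk p₁ r)
      = (Ideal.Quotient.mk q) (algebraMap R ↥(integralClosure R S) r) := by
    intro r; rw [hρ₀, Ideal.Quotient.lift_mk]; rfl
  have hρ₀inj : Function.Injective ρ₀ := by
    rw [injective_iff_map_eq_zero]
    intro y hy
    obtain ⟨r, rfl⟩ := Ideal.Quotient.mk_surjective y
    rw [hρ₀mk] at hy
    have : ω (algebraMap R ↥T₁ r) = 0 := by rw [KC r, hy, map_zero]
    have hrp : r ∈ p₁ := this
    exact Ideal.Quotient.eq_zero_iff_mem.mpr hrp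
  set ω' : (↥T₁ ⧸ Q₁) →+* Polynomial (↥(integralClosure R S) ⧸ q) := Ideal.Quotient.lift Q₁ ω (fun a ha => RingHom.mem_ker.mp ha) with hω'
  -- the algebraic element
  set ξ : ↥T₁ ⧸ Q₁ := Ideal.Quotient.mk Q₁ (φ Polynomial.X) with hξ
  obtain ⟨g, hg0, hgev⟩ := (halg.isAlgebraic ξ)
  have hcomm : ∀ y : R ⧸ p₁, ω' (algebraMap (R ⧸ p₁) (↥T₁ ⧸ Q₁) y) = Polynomial.C (ρ₀ y) := by
    intro y
    obtain ⟨r, rfl⟩ := Ideal.Quotient.mk_surjective y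
    have h1 : algebraMap (R ⧸ p₁) (↥T₁ ⧸ Q₁) (Ideal.Quotient.mk p₁ r)
        = Ideal.Quotient.mk Q₁ (algebraMap R ↥T₁ r) := by
      exact Ideal.quotientMap_mk
    rw [h1, hω', Ideal.Quotient.lift_mk, KC r, hρ₀mk]
  have hmain : Polynomial.map ρ₀ g = 0 := by
    have h1 : ω' (Polynomial.aeval ξ g) = 0 := by rw [hgev, map_zero]
    rw [aeval_def, Polynomial.hom_eval₂] at h1
    have h2 : ω' ξ = Polynomial.X := by
      rw [hξ, hω', Ideal.Quotient.lift_mk, hωφ]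
      simp [hΘ]
    rw [h2] at h1
    have h3 : (ω'.comp (algebraMap (R ⧸ p₁) (↥T₁ ⧸ Q₁)))
        = (Polynomial.C : (↥(integralClosure R S) ⧸ q) →+* Polynomial (↥(integralClosure R S) ⧸ q)).comp ρ₀ := by
      exact RingHom.ext hcomm
    rw [h3] at h1
    rw [← h1]
    rfl
  exact hg0 (Polynomial.map_injective ρ₀ hρ₀inj (by rw [hmain, Polynomial.map_zero]))

theorem exists_crit
    (hRA : ∀ T : Subalgebra R S, ∀ Q : Ideal T, Q.IsPrime →
        Algebra.IsAlgebraic (R ⧸ Q.comap (algebraMap R T)) (T ⧸ Q))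
    (x : S) :
    ∃ u v : S, u ∈ integralClosure R S ∧ v ∈ integralClosure R S ∧
      u * x ∈ integralClosure R S ∧ v * x ∈ integralClosure R S ∧ u + v * x = 1 := by
  classical
  set 𝔠 : Ideal ↥(integralClosure R S) :=
    { carrier := {α : ↥(integralClosure R S) | ∃ u v : S,
        u ∈ integralClosure R S ∧ v ∈ integralClosure R S ∧
        u * x ∈ integralClosure R S ∧ v * x ∈ integralClosure R S ∧ (α : S) = u + v * x},
      add_mem' := by
        rintro a b ⟨u, v, hu, hv, hux, hvx, hab⟩ ⟨u', v', hu', hv', hux', hvx', hab'⟩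
        refine ⟨u + u', v + v', Subalgebra.add_mem _ hu hu', Subalgebra.add_mem _ hv hv', ?_, ?_, ?_⟩
        · have h : (u + u') * x = u * x + u' * x := by ring
          rw [h]; exact Subalgebra.add_mem _ hux hux'
        · have h : (v + v') * x = v * x + v' * x := by ring
          rw [h]; exact Subalgebra.add_mem _ hvx hvx'
        · push_cast
          rw [hab, hab']; ring
      zero_mem' := by
        refine ⟨0, 0, Subalgebra.zero_mem _, Subalgebra.zero_mem _, ?_, ?_, by push_cast; ring⟩
        · rw [zero_mul]; exact Subalgebra.zero_mem _
        · rw [zero_mul]; exact Subalgebra.zero_mem _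
      smul_mem' := by
        rintro c a ⟨u, v, hu, hv, hux, hvx, hab⟩
        refine ⟨(c : S) * u, (c : S) * v, Subalgebra.mul_mem _ (SetLike.coe_mem c) hu,
          Subalgebra.mul_mem _ (SetLike.coe_mem c) hv, ?_, ?_, ?_⟩
        · have h : ((c : S) * u) * x = (c : S) * (u * x) := by ring
          rw [h]; exact Subalgebra.mul_mem _ (SetLike.coe_mem c) hux
        · have h : ((c : S) * v) * x = (c : S) * (v * x) := by ring
          rw [h]; exact Subalgebra.mul_mem _ (SetLike.coe_mem c) hvx
        · have h : ((c • a : ↥(integralClosure R S)) : S) = (c : S) * (a : S) := rfl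
          rw [h, hab]; ring } with h𝔠
  have hle : Ideal.span {a : ↥(integralClosure R S) | ∃ g : Polynomial ↥(integralClosure R S),
       eval₂ (algebraMap ↥(integralClosure R S) S) x g = 0 ∧ ∃ i, g.coeff i = a} ≤ 𝔠 := by
    rw [Ideal.span_le]
    rintro a ⟨g, hg, i, rfl⟩
    exact horner_decomp x g hg i
  have h1 : (1 : ↥(integralClosure R S)) ∈ 𝔠 := by
    have htop : (⊤ : Ideal ↥(integralClosure R S)) ≤ 𝔠 := by
      rw [← content_span_top hRA x]; exact hle
    exact htop Submodule.mem_top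
  obtain ⟨u, v, hu, hv, hux, hvx, h1'⟩ := h1
  refine ⟨u, v, hu, hv, hux, hvx, ?_⟩
  rw [← h1']; rfl

theorem backward_main
    (hRA : ∀ T : Subalgebra R S, ∀ Q : Ideal T, Q.IsPrime →
        Algebra.IsAlgebraic (R ⧸ Q.comap (algebraMap R T)) (T ⧸ Q)) :
    IsQuasiPruferExtension R S := by
  intro T hle x hx
  by_cases hS : (1 : S) = 0
  · have hx0 : x = 0 := by
      calc x = x * 1 := by ring
      _ = x * 0 := by rw [hS]
      _ = 0 := by ring
    rw [hx0]; exact Subalgebra.zero_mem _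
  obtain ⟨u, v, hu, hv, hux, hvx, h1⟩ := exists_crit hRA x
  obtain ⟨gT, hmonic, hev⟩ := hx
  have hn0 : gT.natDegree ≠ 0 := by
    intro h0
    have hone : gT = 1 := (Polynomial.Monic.natDegree_eq_zero hmonic).mp h0
    rw [hone] at hev
    simp at hev
    exact hS (by rw [← hev])
  obtain ⟨n, hn⟩ : ∃ n, gT.natDegree = n + 1 := ⟨gT.natDegree - 1, by omega⟩
  have hsmul : ∀ (c : ↥T) (y : S), c • y = (c : S) * y := by
    intro c y; rw [Algebra.smul_def]; rfl
  have hxn : x ^ (n+1) = -∑ i ∈ Finset.range (n+1), ((gT.coeff i : S)) * x ^ i := by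
    have h2 := Polynomial.aeval_eq_sum_range (p := gT) x
    rw [aeval_def, hev, hn, Finset.sum_range_succ] at h2
    have hlead : gT.coeff (n+1) = 1 := by
      have h3 := Polynomial.Monic.coeff_natDegree hmonic
      rwa [hn] at h3
    rw [hlead, one_smul] at h2
    simp only [hsmul] at h2
    linear_combination -h2
  have hvn : v ^ n * x ^ (n+1) ∈ T := by
    have heq : v ^ n * x ^ (n+1)
        = -∑ i ∈ Finset.range (n+1), ((gT.coeff i : S)) * ((v*x)^i * v^(n-i)) := by
      rw [hxn, mul_neg, Finset.mul_sum]
      congr 1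
      refine Finset.sum_congr rfl ?_
      intro i hi
      have hiin : i ≤ n := Nat.lt_succ_iff.mp (Finset.mem_range.mp hi)
      have hp : (v*x)^i * v^(n-i) = v^n * x^i := by
        calc (v*x)^i * v^(n-i) = (v^i * v^(n-i)) * x^i := by rw [mul_pow]; ring
        _ = v^(i + (n-i)) * x^i := by rw [pow_add]
        _ = v^n * x^i := by rw [Nat.add_sub_cancel' hiin]
      rw [hp]; ring
    rw [heq]
    refine Subalgebra.neg_mem _ (Subalgebra.sum_mem _ ?_)
    intro i hi
    refine Subalgebra.mul_mem _ (SetLike.coe_mem _) (Subalgebra.mul_mem _ ?_ ?_)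
    · exact Subalgebra.pow_mem _ (hle hvx) _
    · exact Subalgebra.pow_mem _ (hle hv) _
  have hx1 : x = x * (u + v*x)^(n+1) := by rw [h1, one_pow, mul_one]
  rw [hx1, add_pow, Finset.mul_sum]
  refine Subalgebra.sum_mem _ ?_
  intro k hk
  rcases k with _ | j
  · have he : x * (u^0 * (v*x)^(n+1-0) * ((Nat.choose (n+1) 0 : ℕ) : S))
        = (v*x) * (v^n * x^(n+1)) := by
      simp only [pow_zero, one_mul, Nat.sub_zero, Nat.choose_zero_right, Nat.cast_one, mul_one]
      ring
    rw [he]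
    exact Subalgebra.mul_mem _ (hle hvx) hvn
  · have hsub : n + 1 - (j+1) = n - j := by omega
    have he : x * (u^(j+1) * (v*x)^(n+1-(j+1)) * ((Nat.choose (n+1) (j+1) : ℕ) : S))
        = (u*x) * (u^j * ((v*x)^(n-j) * ((Nat.choose (n+1) (j+1) : ℕ) : S))) := by
      rw [hsub]; ring
    rw [he]
    refine Subalgebra.mul_mem _ (hle hux) (Subalgebra.mul_mem _ ?_ (Subalgebra.mul_mem _ ?_ ?_))
    · exact Subalgebra.pow_mem _ (hle hu) _
    · exact Subalgebra.pow_mem _ (hle hvx) _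
    · exact Subalgebra.natCast_mem _ _

theorem forward_main (hQP : IsQuasiPruferExtension R S) :
    ∀ T : Subalgebra R S, ∀ Q : Ideal T, Q.IsPrime →
        Algebra.IsAlgebraic (R ⧸ Q.comap (algebraMap R T)) (T ⧸ Q) := by
  classical
  intro T Q hQ
  haveI := hQ
  constructor
  intro ξ
  obtain ⟨z, rfl⟩ := Ideal.Quotient.mk_surjective ξ
  -- Step 1 : z belongs to the subalgebra generated by the integral closure and z², z³
  set B₀ : Subalgebra R S :=
    Algebra.adjoin R ((integralClosure R S : Set S) ∪ {(z:S)^2, (z:S)^3}) with hB₀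
  have hleB : integralClosure R S ≤ B₀ := fun s hs => Algebra.subset_adjoin (Or.inl hs)
  have hz2 : ((z:S)^2) ∈ B₀ := Algebra.subset_adjoin (Or.inr (by simp))
  have hintB : IsIntegral ↥B₀ (z : S) := by
    refine ⟨X^2 - C (⟨(z:S)^2, hz2⟩ : ↥B₀), ?_, ?_⟩
    · exact Polynomial.monic_X_pow_sub_C _ (by norm_num)
    · simp only [eval₂_sub, eval₂_pow, eval₂_X, eval₂_C]
      have hval : (algebraMap ↥B₀ S) (⟨(z:S)^2, hz2⟩ : ↥B₀) = (z:S)^2 := rfl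
      rw [hval, sub_self]
  have hzB : (z:S) ∈ B₀ := hQP B₀ hleB _ hintB
  -- Step 2 : polynomial representation with vanishing linear coefficient
  have hrep : ∃ P : Polynomial ↥(integralClosure R S), P.coeff 1 = 0 ∧
      eval₂ (algebraMap ↥(integralClosure R S) S) (z:S) P = (z:S) := by
    have key : ∀ w ∈ B₀, ∃ P : Polynomial ↥(integralClosure R S), P.coeff 1 = 0 ∧
        eval₂ (algebraMap ↥(integralClosure R S) S) (z:S) P = w := by
      intro w hw
      induction hw using Algebra.adjoin_induction with
      | mem s hs =>
        rcases hs with hs | hs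
        · exact ⟨C ⟨s, hs⟩, by simp, by rw [eval₂_C]; rfl⟩
        · rcases hs with hs | hs
          · exact ⟨X^2, by simp, by rw [hs, eval₂_pow, eval₂_X]⟩
          · rw [Set.mem_singleton_iff] at hs
            exact ⟨X^3, by simp, by rw [hs, eval₂_pow, eval₂_X]⟩
      | algebraMap r =>
        refine ⟨C (algebraMap R ↥(integralClosure R S) r), by simp, ?_⟩
        rw [eval₂_C]
        rfl
      | add a b _ _ iha ihb =>
        obtain ⟨P₁, hP₁, hP₁e⟩ := iha
        obtain ⟨P₂, hP₂, hP₂e⟩ := ihb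
        exact ⟨P₁ + P₂, by simp [hP₁, hP₂], by rw [eval₂_add, hP₁e, hP₂e]⟩
      | mul a b _ _ iha ihb =>
        obtain ⟨P₁, hP₁, hP₁e⟩ := iha
        obtain ⟨P₂, hP₂, hP₂e⟩ := ihb
        refine ⟨P₁ * P₂, ?_, by rw [eval₂_mul, hP₁e, hP₂e]⟩
        rw [Polynomial.coeff_mul]
        have h1 : (Finset.HasAntidiagonal.antidiagonal 1 : Finset (ℕ × ℕ)) = {(0,1), (1,0)} := rfl
        rw [h1]
        simp [hP₁, hP₂]
    exact key _ hzB
  obtain ⟨P, hP1, hPev⟩ := hrep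
  -- Step 3 : the integral extension T'' of T generated by the integral closure
  set T'' : Subalgebra ↥T S := Algebra.adjoin ↥T ((integralClosure R S : Set S)) with hT''
  haveI hTint : Algebra.IsIntegral ↥T ↥T'' := by
    refine Algebra.IsIntegral.adjoin ?_
    intro s hs
    exact IsIntegral.tower_top (A := ↥T) hs
  have hbot : (⊥ : Ideal ↥T'').comap (algebraMap ↥T ↥T'') ≤ Q := by
    intro y hy
    have h1 : algebraMap ↥T ↥T'' y = 0 := by
      simpa [Ideal.mem_comap] using hy
    have h2 : (algebraMap ↥T S) y = 0 := by
      simpa using congrArg (fun w : ↥T'' => (w : S)) h1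
    have h4 : y = 0 := Subtype.ext h2
    rw [h4]
    exact Q.zero_mem
  obtain ⟨Q'', hQ''ge, hQ''p, hQ''c⟩ :=
    Ideal.exists_ideal_over_prime_of_isIntegral Q ⊥ hbot
  haveI := hQ''p
  set π : ↥T'' →+* (↥T'' ⧸ Q'') := Ideal.Quotient.mk Q'' with hπ
  set ν : ↥(integralClosure R S) →+* ↥T'' :=
    ((integralClosure R S).val : ↥(integralClosure R S) →+* S).codRestrict T''.toSubring
      (fun a => Algebra.subset_adjoin (SetLike.coe_mem a)) with hν
  have hνval : ∀ a : ↥(integralClosure R S), ((ν a : S)) = (a : S) := fun a => rfl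
  set z'' : ↥T'' := algebraMap ↥T ↥T'' z with hz''
  set jmap : (↥T ⧸ Q) →+* (↥T'' ⧸ Q'') :=
    Ideal.quotientMap Q'' (algebraMap ↥T ↥T'') hQ''c.ge with hjmap
  have hjinj : Function.Injective jmap := Ideal.quotientMap_injective' hQ''c.le
  set p : Ideal R := Q.comap (algebraMap R ↥T) with hp
  haveI hpp : p.IsPrime := Ideal.IsPrime.comap _
  letI : Algebra (R ⧸ p) (↥T'' ⧸ Q'') :=
    (jmap.comp (algebraMap (R ⧸ p) (↥T ⧸ Q))).toAlgebra
  have halgD : ∀ r : R, algebraMap (R ⧸ p) (↥T'' ⧸ Q'') (Ideal.Quotient.mk p r)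
      = π (ν (algebraMap R ↥(integralClosure R S) r)) := by
    intro r
    have h1 : algebraMap (R ⧸ p) (↥T'' ⧸ Q'') (Ideal.Quotient.mk p r)
        = jmap (algebraMap (R ⧸ p) (↥T ⧸ Q) (Ideal.Quotient.mk p r)) := rfl
    have h2 : algebraMap (R ⧸ p) (↥T ⧸ Q) (Ideal.Quotient.mk p r)
        = Ideal.Quotient.mk Q (algebraMap R ↥T r) := by
      exact Ideal.quotientMap_mk
    have h3 : jmap (Ideal.Quotient.mk Q (algebraMap R ↥T r))
        = π (algebraMap ↥T ↥T'' (algebraMap R ↥T r)) := Ideal.quotientMap_mk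
    rw [h1, h2, h3]
    exact congrArg π (Subtype.ext rfl)
  have hinjRpD : Function.Injective (algebraMap (R ⧸ p) (↥T'' ⧸ Q'')) := by
    have h1 : algebraMap (R ⧸ p) (↥T'' ⧸ Q'')
        = jmap.comp (algebraMap (R ⧸ p) (↥T ⧸ Q)) := rfl
    rw [h1, RingHom.coe_comp]
    exact Function.Injective.comp hjinj Ideal.algebraMap_quotient_injective
  -- Step 4 : transport the polynomial identity to the quotient
  set μ : ↥(integralClosure R S) →+* (↥T'' ⧸ Q'') := π.comp ν with hμ
  set τ : ↥T'' ⧸ Q'' := π z'' with hτ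
  have hev'' : eval₂ ν z'' P = z'' := by
    apply Subtype.val_injective
    have h1 : ((eval₂ ν z'' P : ↥T'') : S)
        = eval₂ ((T''.val : ↥T'' →+* S).comp ν) ((z'' : S)) P := by
      have := Polynomial.hom_eval₂ P ν (T''.val : ↥T'' →+* S) z''
      simpa using this
    have h2 : (T''.val : ↥T'' →+* S).comp ν = algebraMap ↥(integralClosure R S) S :=
      RingHom.ext (fun a => rfl)
    have h3 : ((z'' : S)) = (z : S) := rfl
    calc ((eval₂ ν z'' P : ↥T'') : S) = eval₂ ((T''.val : ↥T'' →+* S).comp ν) ((z'' : S)) P := h1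
    _ = eval₂ (algebraMap ↥(integralClosure R S) S) (z:S) P := by rw [h2, h3]
    _ = (z : S) := hPev
    _ = ((z'' : S)) := h3.symm
  have hevD : eval₂ μ τ P = τ := by
    have h1 := Polynomial.hom_eval₂ P ν π z''
    rw [hev''] at h1
    rw [hμ, hτ, ← h1]
  -- Step 5 : the polynomial over the quotient domain
  set qD : Polynomial (↥T'' ⧸ Q'') := P.map μ - X with hqD
  have hqD1 : qD.coeff 1 = -1 := by
    rw [hqD, Polynomial.coeff_sub, Polynomial.coeff_map, hP1, map_zero, Polynomial.coeff_X_one]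
    ring
  have hqDne : qD ≠ 0 := by
    intro h0
    rw [h0] at hqD1
    simp at hqD1
  have hqDev : Polynomial.eval τ qD = 0 := by
    rw [hqD, Polynomial.eval_sub, Polynomial.eval_X, Polynomial.eval_map]
    rw [show Polynomial.eval₂ μ τ P = τ from hevD, sub_self]
  have hμint : ∀ a : ↥(integralClosure R S), IsIntegral (R ⧸ p) (μ a) := by
    intro a
    have ha : IsIntegral R a :=
      (isIntegral_algHom_iff (integralClosure R S).val Subtype.val_injective).mp
        (SetLike.coe_mem a)
    obtain ⟨f₀, hm, he⟩ := ha
    refine ⟨f₀.map (Ideal.Quotient.mk p), hm.map _, ?_⟩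
    rw [eval₂_map]
    have hcomp : ((algebraMap (R ⧸ p) (↥T'' ⧸ Q'')).comp (Ideal.Quotient.mk p))
        = μ.comp (algebraMap R ↥(integralClosure R S)) := by
      refine RingHom.ext (fun r => ?_)
      rw [RingHom.comp_apply, RingHom.comp_apply, halgD r]
      rfl
    rw [hcomp, ← Polynomial.hom_eval₂]
    rw [show eval₂ (algebraMap R ↥(integralClosure R S)) a f₀ = 0 from he, map_zero]
  have hqDint : ∀ i, IsIntegral (R ⧸ p) (qD.coeff i) := by
    intro i
    by_cases hi : i = 1
    · rw [hi, hqD1]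
      exact (isIntegral_one).neg
    · have h1 : qD.coeff i = μ (P.coeff i) := by
        rw [hqD, Polynomial.coeff_sub, Polynomial.coeff_map, Polynomial.coeff_X,
          if_neg (fun h => hi h.symm), sub_zero]
      rw [h1]
      exact hμint _
  -- Step 6 : conclude via the transitivity lemma
  have halg := isAlgebraic_of_integral_coeffs hinjRpD τ qD hqDne hqDev hqDint
  obtain ⟨g, hg0, hgev⟩ := halg
  refine ⟨g, hg0, ?_⟩
  apply hjinj
  rw [map_zero]
  rw [aeval_def] at hgev ⊢
  have h7 : jmap (eval₂ (algebraMap (R ⧸ p) (↥T ⧸ Q)) (Ideal.Quotient.mk Q z) g)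
      = eval₂ (algebraMap (R ⧸ p) (↥T'' ⧸ Q'')) τ g := by
    rw [Polynomial.hom_eval₂]
    have e1 : jmap.comp (algebraMap (R ⧸ p) (↥T ⧸ Q)) = algebraMap (R ⧸ p) (↥T'' ⧸ Q'') := rfl
    have e2 : jmap (Ideal.Quotient.mk Q z) = τ := Ideal.quotientMap_mk
    rw [e1, e2]
  rw [h7]
  exact hgev

end Aux

/-- **Theorem 2.3 (second equivalence).** A ring extension `R ⊆ S` is quasi-Prüfer if and only
if `R ⊆ S` is a residually algebraic pair: for each intermediate ring `T ∈ [R,S]` and each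
prime `Q` of `T`, the extension `R/(Q ∩ R) ⊆ T/Q` is algebraic. -/
theorem isQuasiPruferExtension_iff_residually_algebraic_pair {R S : Type*} [CommRing R]
    [CommRing S] [Algebra R S] (hinj : Function.Injective (algebraMap R S)) :
    IsQuasiPruferExtension R S ↔
      ∀ T : Subalgebra R S, ∀ Q : Ideal T, Q.IsPrime →
        Algebra.IsAlgebraic (R ⧸ Q.comap (algebraMap R T)) (T ⧸ Q) := by
  constructor
  · exact forward_main
  · exact backward_main
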